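/- Let L ∈ ℕ with L ≥ 1, let m, p ≥ 1, set q := m + p, let K ∈ ℕ with K ≥ 1, and let τ_1, …, τ_K > 0. For each k, let u_k ∈ H^{L−1}([0,τ_k];ℝ^m) and y_k ∈ H^{L}([0,τ_k];ℝ^p), and set w_k := (u_k; y_k) : [0,τ_k] → ℝ^q. Say that R ∈ ℝ^{p×qL}, partitioned as R = [R_{u,0} R_{y,0} ⋯ R_{u,L−1} R_{y,L−1}], is consistent with the noise-free data if y_k^{(L)}(t) + Σ_{ℓ=0}^{L−1} ( R_{u,ℓ} u_k^{(ℓ)}(t) + R_{y,ℓ} y_k^{(ℓ)}(t) ) = 0 for almost every t ∈ [0,τ_k] and every k = 1,…,K. For k = 1,…,K and φ ∈ H^L_0[0,τ_k], let h_k(φ) ∈ ℝ^{qL} be the vector obtained by stacking the blocks (−1)^ℓ ∫_0^{τ_k} φ^{(ℓ)}(t) w_k(t) dt ∈ ℝ^q for ℓ = 0, …, L−1. Assume there exists R_s ∈ ℝ^{p×qL} consistent with the noise-free data. Then the following are equivalent: (i) every R ∈ ℝ^{p×qL} consistent with the noise-free data equals R_s; (ii) the linear span of { h_k(φ) : k =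 1,…,K, φ ∈ H^L_0[0,τ_k] } equals ℝ^{qL}. -/

import Mathlib

open MeasureTheory Matrix
open scoped ContDiff

/-- `D` is a chain of a.e. derivatives on `[0,τ]` up to order `L`: for each `ℓ < L`,
`D (ℓ+1)` is integrable on `[0,τ]` and `D ℓ` is its antiderivative there, i.e. `D ℓ` is
absolutely continuous on `[0,τ]` with a.e. derivative `D (ℓ+1)`. -/
def DerivChain (τ : ℝ) (L : ℕ) {E : Type} [NormedAddCommGroup E] [NormedSpace ℝ E]
    (D : ℕ → ℝ → E) : Prop :=
  ∀ ℓ < L, IntervalIntegrable (D (ℓ + 1)) MeasureTheory.volume 0 τ ∧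
    ∀ t ∈ Set.Icc (0 : ℝ) τ, D ℓ t = D ℓ 0 + ∫ s in (0 : ℝ)..t, D (ℓ + 1) s

/-- `f ∈ L²([0,τ]; E)`. -/
def MemL2 (τ : ℝ) {E : Type} [NormedAddCommGroup E] (f : ℝ → E) : Prop :=
  MeasureTheory.MemLp f 2 (MeasureTheory.volume.restrict (Set.Ioc (0 : ℝ) τ))

/-- `D` represents an element of `H^L_0[0,τ]` together with its derivatives: the chain
condition, `D L ∈ L²(0,τ)`, and `D ℓ` vanishes at `0` and at `τ` for all `ℓ < L`.
The element of `H^L_0[0,τ]` itself is `D 0`. -/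
def IsH0 (τ : ℝ) (L : ℕ) (D : ℕ → ℝ → ℝ) : Prop :=
  DerivChain τ L D ∧ MemL2 τ (D L) ∧ ∀ ℓ < L, D ℓ 0 = 0 ∧ D ℓ τ = 0

/-- `D` represents an element of the Sobolev space `H^M([0,τ]; E)` together with its
derivatives: the chain condition and `D M ∈ L²`. The element itself is `D 0`. -/
def IsHSob (τ : ℝ) (M : ℕ) {E : Type} [NormedAddCommGroup E] [NormedSpace ℝ E]
    (D : ℕ → ℝ → E) : Prop :=
  DerivChain τ M D ∧ MemL2 τ (D M)

section StmtHelpers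

open Set
open scoped ContDiff

variable {τ : ℝ}

private lemma L2_intervalIntegrable (hτ : 0 ≤ τ) {f : ℝ → ℝ} (h : MemL2 τ f) :
    IntervalIntegrable f volume 0 τ := by
  rw [intervalIntegrable_iff_integrableOn_Ioc_of_le hτ]
  haveI : IsFiniteMeasure (volume.restrict (Set.Ioc (0:ℝ) τ)) :=
    ⟨by rw [Measure.restrict_apply_univ]; exact measure_Ioc_lt_top⟩
  exact h.integrable (by norm_num)

private lemma chain_continuousOn (hτ : 0 ≤ τ) {N : ℕ} {F : ℕ → ℝ → ℝ} (hc : DerivChain τ N F)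
    {b : ℕ} (hb : b < N) : ContinuousOn (F b) (Set.Icc 0 τ) := by
  obtain ⟨hint, heq⟩ := hc b hb
  have h1 : ContinuousOn (fun t => F b 0 + ∫ s in (0:ℝ)..t, F (b+1) s) (Set.Icc 0 τ) := by
    apply ContinuousOn.add continuousOn_const
    have := intervalIntegral.continuousOn_primitive_interval'
      (μ := volume) (b₁ := 0) (b₂ := τ) (a := 0) hint (by simp [Set.left_mem_uIcc])
    rwa [Set.uIcc_of_le hτ] at this
  exact h1.congr heq

private lemma chain_intervalIntegrable (hτ : 0 ≤ τ) {N : ℕ} {F : ℕ → ℝ → ℝ}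
    (hc : DerivChain τ N F) (htop : IntervalIntegrable (F N) volume 0 τ) {b : ℕ} (hb : b ≤ N) :
    IntervalIntegrable (F b) volume 0 τ := by
  rcases eq_or_lt_of_le hb with rfl | hlt
  · exact htop
  · cases b with
    | zero =>
      have h := chain_continuousOn hτ hc hlt
      rw [← Set.uIcc_of_le hτ] at h
      exact h.intervalIntegrable
    | succ n => exact (hc n (by omega)).1

private lemma fubini_ibp (hτ : 0 ≤ τ) {f g : ℝ → ℝ}
    (hf : IntegrableOn f (Set.Ioc 0 τ) volume) (hg : IntegrableOn g (Set.Ioc 0 τ) volume) :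
    (∫ t in Set.Ioc (0:ℝ) τ, (∫ s in Set.Ioc (0:ℝ) t, f s) * g t)
      + (∫ t in Set.Ioc (0:ℝ) τ, f t * ∫ s in Set.Ioc (0:ℝ) t, g s)
      = (∫ t in Set.Ioc (0:ℝ) τ, f t) * ∫ t in Set.Ioc (0:ℝ) τ, g t := by
  set μ := volume.restrict (Set.Ioc (0:ℝ) τ) with hμ
  have hμIoc : MeasurableSet (Set.Ioc (0:ℝ) τ) := measurableSet_Ioc
  set Φ : ℝ × ℝ → ℝ := fun z => f z.2 * g z.1 with hΦdef
  have hΦ : Integrable Φ (μ.prod μ) := by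
    have := (hg.mul_prod hf : Integrable (fun z : ℝ × ℝ => g z.1 * f z.2) (μ.prod μ))
    simpa [hΦdef, mul_comm] using this
  set A : Set (ℝ × ℝ) := {z | z.2 ≤ z.1} with hAdef
  have hA : MeasurableSet A := measurableSet_le measurable_snd measurable_fst
  have hind : A.indicator Φ + Aᶜ.indicator Φ = Φ := Set.indicator_self_add_compl A Φ
  have hint1 : Integrable (A.indicator Φ) (μ.prod μ) := hΦ.indicator hA
  have hint2 : Integrable (Aᶜ.indicator Φ) (μ.prod μ) := hΦ.indicator hA.compl
  have e1 : (∫ z, A.indicator Φ z ∂(μ.prod μ))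
      = ∫ t in Set.Ioc (0:ℝ) τ, (∫ s in Set.Ioc (0:ℝ) t, f s) * g t := by
    rw [MeasureTheory.integral_prod _ hint1]
    apply setIntegral_congr_fun hμIoc
    intro t ht
    have : (fun s => A.indicator Φ (t, s)) = (Set.Iic t).indicator (fun s => f s * g t) := by
      funext s
      by_cases h : s ≤ t
      · simp [hAdef, hΦdef, Set.indicator_of_mem, h, Set.mem_Iic.mpr h, A, Φ]
      · simp [Set.indicator_of_notMem, h, A, Φ, Set.mem_Iic]
    dsimp only
    rw [this, integral_indicator measurableSet_Iic, hμ,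
      Measure.restrict_restrict measurableSet_Iic]
    have hIic : Set.Iic t ∩ Set.Ioc 0 τ = Set.Ioc 0 t := by
      ext x; simp only [Set.mem_inter_iff, Set.mem_Iic, Set.mem_Ioc]
      constructor
      · rintro ⟨h1, h2, _⟩; exact ⟨h2, h1⟩
      · rintro ⟨h1, h2⟩; exact ⟨h2, h1, h2.trans ht.2⟩
    rw [hIic, integral_mul_const]
  have e2 : (∫ z, Aᶜ.indicator Φ z ∂(μ.prod μ))
      = ∫ s in Set.Ioc (0:ℝ) τ, f s * ∫ t in Set.Ioc (0:ℝ) s, g t := by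
    rw [MeasureTheory.integral_prod_symm _ hint2]
    apply setIntegral_congr_fun hμIoc
    intro s hs
    have : (fun t => Aᶜ.indicator Φ (t, s)) = (Set.Iio s).indicator (fun t => f s * g t) := by
      funext t
      by_cases h : t < s
      · simp [hAdef, hΦdef, Set.indicator_of_mem, Set.mem_Iio.mpr h, A, Φ,
          not_le.mpr h, Set.mem_compl_iff, Set.mem_setOf_eq]
      · simp [Set.indicator_of_notMem, h, A, Φ, Set.mem_Iio, not_lt.mp h]
    dsimp only
    rw [this, integral_indicator measurableSet_Iio, hμ,
      Measure.restrict_restrict measurableSet_Iio]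
    have hIio : Set.Iio s ∩ Set.Ioc 0 τ = Set.Ioo 0 s := by
      ext x; simp only [Set.mem_inter_iff, Set.mem_Iio, Set.mem_Ioc, Set.mem_Ioo]
      constructor
      · rintro ⟨h1, h2, _⟩; exact ⟨h2, h1⟩
      · rintro ⟨h1, h2⟩; exact ⟨h2, h1, h2.le.trans hs.2⟩
    rw [hIio, MeasureTheory.integral_const_mul, ← integral_Ioc_eq_integral_Ioo]
  have e3 : (∫ z, A.indicator Φ z ∂(μ.prod μ)) + (∫ z, Aᶜ.indicator Φ z ∂(μ.prod μ))
      = (∫ t in Set.Ioc (0:ℝ) τ, f t) * ∫ t in Set.Ioc (0:ℝ) τ, g t := by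
    rw [← integral_add hint1 hint2]
    have : (fun z => A.indicator Φ z + Aᶜ.indicator Φ z) = Φ := by
      funext z; exact congrFun hind z
    rw [this]
    have := MeasureTheory.integral_prod_mul (μ := μ) (ν := μ) (f := g) (g := f)
    simp only [hΦdef]
    rw [show (∫ z : ℝ × ℝ, f z.2 * g z.1 ∂μ.prod μ)
        = ∫ z : ℝ × ℝ, g z.1 * f z.2 ∂μ.prod μ by simp [mul_comm]]
    rw [this, mul_comm]
  rw [← e1, ← e2, e3]

private lemma ibp (hτ : 0 ≤ τ) {f g F G : ℝ → ℝ}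
    (hf : IntervalIntegrable f volume 0 τ) (hg : IntervalIntegrable g volume 0 τ)
    (hF : ∀ t ∈ Set.Icc (0:ℝ) τ, F t = F 0 + ∫ s in (0:ℝ)..t, f s)
    (hG : ∀ t ∈ Set.Icc (0:ℝ) τ, G t = G 0 + ∫ s in (0:ℝ)..t, g s) :
    ∫ t in (0:ℝ)..τ, F t * g t
      = F τ * G τ - F 0 * G 0 - ∫ t in (0:ℝ)..τ, f t * G t := by
  have hfI : IntegrableOn f (Set.Ioc 0 τ) volume :=
    (intervalIntegrable_iff_integrableOn_Ioc_of_le hτ).mp hf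
  have hgI : IntegrableOn g (Set.Ioc 0 τ) volume :=
    (intervalIntegrable_iff_integrableOn_Ioc_of_le hτ).mp hg
  have hIoc : MeasurableSet (Set.Ioc (0:ℝ) τ) := measurableSet_Ioc
  have prim : ∀ t ∈ Set.Icc (0:ℝ) τ, (∫ s in (0:ℝ)..t, f s) = ∫ s in Set.Ioc (0:ℝ) t, f s :=
    fun t ht => intervalIntegral.integral_of_le ht.1
  have prim' : ∀ t ∈ Set.Icc (0:ℝ) τ, (∫ s in (0:ℝ)..t, g s) = ∫ s in Set.Ioc (0:ℝ) t, g s :=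
    fun t ht => intervalIntegral.integral_of_le ht.1
  have hPfg : IntegrableOn (fun t => (∫ s in (0:ℝ)..t, f s) * g t) (Set.Ioc 0 τ) volume := by
    rw [← intervalIntegrable_iff_integrableOn_Ioc_of_le hτ]
    apply hg.continuousOn_mul
    have := intervalIntegral.continuousOn_primitive_interval'
      (μ := volume) (b₁ := 0) (b₂ := τ) (a := 0) hf (by simp [Set.left_mem_uIcc])
    exact this
  have hfPg : IntegrableOn (fun t => f t * (∫ s in (0:ℝ)..t, g s)) (Set.Ioc 0 τ) volume := by
    rw [← intervalIntegrable_iff_integrableOn_Ioc_of_le hτ]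
    apply hf.mul_continuousOn
    have := intervalIntegral.continuousOn_primitive_interval'
      (μ := volume) (b₁ := 0) (b₂ := τ) (a := 0) hg (by simp [Set.left_mem_uIcc])
    exact this
  set If := ∫ t in Set.Ioc (0:ℝ) τ, f t with hIf
  set Ig := ∫ t in Set.Ioc (0:ℝ) τ, g t with hIg
  have key : (∫ t in Set.Ioc (0:ℝ) τ, (∫ s in (0:ℝ)..t, f s) * g t)
      + (∫ t in Set.Ioc (0:ℝ) τ, f t * (∫ s in (0:ℝ)..t, g s)) = If * Ig := by
    have k1 : (∫ t in Set.Ioc (0:ℝ) τ, (∫ s in (0:ℝ)..t, f s) * g t)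
        = ∫ t in Set.Ioc (0:ℝ) τ, (∫ s in Set.Ioc (0:ℝ) t, f s) * g t := by
      apply setIntegral_congr_fun hIoc
      intro t ht
      dsimp only
      rw [prim t ⟨ht.1.le, ht.2⟩]
    have k2 : (∫ t in Set.Ioc (0:ℝ) τ, f t * (∫ s in (0:ℝ)..t, g s))
        = ∫ t in Set.Ioc (0:ℝ) τ, f t * ∫ s in Set.Ioc (0:ℝ) t, g s := by
      apply setIntegral_congr_fun hIoc
      intro t ht
      dsimp only
      rw [prim' t ⟨ht.1.le, ht.2⟩]
    rw [k1, k2]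
    exact fubini_ibp hτ hfI hgI
  have expandF : (∫ t in (0:ℝ)..τ, F t * g t)
      = F 0 * Ig + ∫ t in Set.Ioc (0:ℝ) τ, (∫ s in (0:ℝ)..t, f s) * g t := by
    rw [intervalIntegral.integral_of_le hτ]
    have : (∫ t in Set.Ioc (0:ℝ) τ, F t * g t)
        = ∫ t in Set.Ioc (0:ℝ) τ, (F 0 * g t + (∫ s in (0:ℝ)..t, f s) * g t) := by
      apply setIntegral_congr_fun hIoc
      intro t ht
      dsimp only
      rw [hF t ⟨ht.1.le, ht.2⟩, add_mul]
    rw [this, integral_add (hgI.const_mul _) hPfg, ← integral_const_mul]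
  have expandG : (∫ t in (0:ℝ)..τ, f t * G t)
      = G 0 * If + ∫ t in Set.Ioc (0:ℝ) τ, f t * (∫ s in (0:ℝ)..t, g s) := by
    rw [intervalIntegral.integral_of_le hτ]
    have : (∫ t in Set.Ioc (0:ℝ) τ, f t * G t)
        = ∫ t in Set.Ioc (0:ℝ) τ, (f t * G 0 + f t * (∫ s in (0:ℝ)..t, g s)) := by
      apply setIntegral_congr_fun hIoc
      intro t ht
      dsimp only
      rw [hG t ⟨ht.1.le, ht.2⟩, mul_add]
    rw [this, integral_add (hfI.mul_const _) hfPg]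
    congr 1
    rw [integral_mul_const, mul_comm]
  have hτmem : τ ∈ Set.Icc (0:ℝ) τ := ⟨hτ, le_rfl⟩
  have hFτ : F τ = F 0 + If := by
    rw [hF τ hτmem, prim τ hτmem]
  have hGτ : G τ = G 0 + Ig := by
    rw [hG τ hτmem, prim' τ hτmem]
  rw [expandF, expandG, hFτ, hGτ]
  linarith [key]

private lemma chain_ibp (hτ : 0 ≤ τ) {L N : ℕ} {D : ℕ → ℝ → ℝ} (hD : IsH0 τ L D)
    {F : ℕ → ℝ → ℝ} (hF : DerivChain τ N F)
    {ℓ : ℕ} (hℓN : ℓ ≤ N) (hℓL : ℓ < L) :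
    ∫ t in (0:ℝ)..τ, D ℓ t * F 0 t = (-1:ℝ)^ℓ * ∫ t in (0:ℝ)..τ, D 0 t * F ℓ t := by
  obtain ⟨hDc, _, hD0⟩ := hD
  have claim : ∀ b ≤ ℓ, ∀ a, a + b = ℓ →
      (∫ t in (0:ℝ)..τ, D ℓ t * F 0 t)
        = (-1:ℝ)^b * ∫ t in (0:ℝ)..τ, D a t * F b t := by
    intro b
    induction b with
    | zero => intro _ a ha; simp at ha; subst ha; simp
    | succ n ih =>
      intro hn1 a ha
      have h1 : (∫ t in (0:ℝ)..τ, D ℓ t * F 0 t)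
          = (-1:ℝ)^n * ∫ t in (0:ℝ)..τ, D (a+1) t * F n t :=
        ih (by omega) (a+1) (by omega)
      have haL : a < L := by omega
      have hnN : n < N := by omega
      have hibp := ibp hτ (hDc a haL).1 (hF n hnN).1 (hDc a haL).2 (hF n hnN).2
      rw [(hD0 a haL).1, (hD0 a haL).2] at hibp
      rw [h1]
      rw [show (∫ t in (0:ℝ)..τ, D (a+1) t * F n t)
          = - ∫ t in (0:ℝ)..τ, D a t * F (n+1) t by rw [hibp]; ring]
      ring
  exact claim ℓ le_rfl 0 (by omega)

private lemma derivChain_comp {N n : ℕ} {F : ℕ → ℝ → (Fin n → ℝ)}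
    (h : DerivChain τ N F) (j : Fin n) :
    DerivChain τ N (fun b t => F b t j) := by
  intro ℓ hℓ
  obtain ⟨hint, heq⟩ := h ℓ hℓ
  set π : (Fin n → ℝ) →L[ℝ] ℝ := ContinuousLinearMap.proj j with hπ
  have hint' : IntervalIntegrable (fun t => F (ℓ+1) t j) volume 0 τ := by
    have : IntervalIntegrable (fun t => π (F (ℓ+1) t)) volume 0 τ := by
      constructor
      · exact (π.integrable_comp hint.1)
      · exact (π.integrable_comp hint.2)
    simpa [hπ] using this
  refine ⟨hint', fun t ht => ?_⟩
  dsimp only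
  rw [congrFun (heq t ht) j, Pi.add_apply]
  congr 1
  have hmono : IntervalIntegrable (F (ℓ+1)) volume 0 t := by
    apply hint.mono_set
    rw [Set.uIcc_of_le ht.1, Set.uIcc_of_le (ht.1.trans ht.2)]
    exact Set.Icc_subset_Icc le_rfl ht.2
  have := π.intervalIntegral_comp_comm (f := F (ℓ+1)) (a := 0) (b := t) (μ := volume) hmono
  simpa [hπ] using this.symm

private lemma memL2_comp {n : ℕ} {f : ℝ → (Fin n → ℝ)} (h : MemL2 τ f) (j : Fin n) :
    MemL2 τ (fun t => f t j) := by
  set π : (Fin n → ℝ) →L[ℝ] ℝ := ContinuousLinearMap.proj j with hπ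
  have := π.comp_memLp' h
  exact this

private lemma isH0_of_smooth (hτ : 0 < τ) (L : ℕ) {φ : ℝ → ℝ}
    (hφ : ContDiff ℝ ∞ φ) (hsupp : HasCompactSupport φ)
    (hsub : tsupport φ ⊆ Set.Ioo 0 τ) :
    IsH0 τ L (fun ℓ => iteratedDeriv ℓ φ) := by
  have hsm : ∀ ℓ, ContDiff ℝ ∞ (iteratedDeriv ℓ φ) := by
    intro ℓ; rw [iteratedDeriv_eq_iterate]; exact hφ.iterate_deriv ℓ
  have hcs : ∀ ℓ, HasCompactSupport (iteratedDeriv ℓ φ) := by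
    intro ℓ; rw [iteratedDeriv_eq_iterate]
    induction ℓ with
    | zero => exact hsupp
    | succ n ih => rw [Function.iterate_succ_apply']; exact ih.deriv
  have hts : ∀ ℓ, tsupport (iteratedDeriv ℓ φ) ⊆ Set.Ioo 0 τ := by
    intro ℓ
    rw [iteratedDeriv_eq_iterate]
    induction ℓ with
    | zero => exact hsub
    | succ n ih =>
      rw [Function.iterate_succ_apply']
      refine subset_trans ?_ ih
      apply closure_minimal (support_deriv_subset) isClosed_closure
  have hderiv : ∀ ℓ, ∀ t : ℝ, HasDerivAt (iteratedDeriv ℓ φ) (iteratedDeriv (ℓ+1) φ t) t := by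
    intro ℓ t
    have hd : DifferentiableAt ℝ (iteratedDeriv ℓ φ) t :=
      (hsm ℓ).differentiable (by simp) t
    have := hd.hasDerivAt
    rwa [show deriv (iteratedDeriv ℓ φ) t = iteratedDeriv (ℓ+1) φ t by
      rw [iteratedDeriv_succ]] at this
  refine ⟨?_, ?_, ?_⟩
  · intro ℓ _
    refine ⟨((hsm (ℓ+1)).continuous).intervalIntegrable 0 τ, fun t _ => ?_⟩
    have := intervalIntegral.integral_eq_sub_of_hasDerivAt
      (f := iteratedDeriv ℓ φ) (f' := iteratedDeriv (ℓ+1) φ)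
      (fun x _ => hderiv ℓ x) (((hsm (ℓ+1)).continuous).intervalIntegrable 0 t)
    rw [this]; ring
  · exact ((hsm L).continuous.memLp_of_hasCompactSupport (hcs L)).restrict _
  · intro ℓ _
    constructor
    · apply image_eq_zero_of_notMem_tsupport
      intro h; exact absurd (hts ℓ h) (by simp [hτ.le, lt_irrefl])
    · apply image_eq_zero_of_notMem_tsupport
      intro h; exact absurd (hts ℓ h) (by simp)

end StmtHelpers

theorem stmt_10 (L m p K : ℕ) (hL : 1 ≤ L) (hm : 1 ≤ m) (hp : 1 ≤ p) (hK : 1 ≤ K)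
    (τ : Fin K → ℝ) (hτ : ∀ k, 0 < τ k)
    (U : Fin K → ℕ → ℝ → Fin m → ℝ) (hU : ∀ k, IsHSob (τ k) (L - 1) (U k))
    (Y : Fin K → ℕ → ℝ → Fin p → ℝ) (hY : ∀ k, IsHSob (τ k) L (Y k))
    (Rsu : Fin L → Matrix (Fin p) (Fin m) ℝ) (Rsy : Fin L → Matrix (Fin p) (Fin p) ℝ)
    (hRs : ∀ k, ∀ᵐ t ∂(MeasureTheory.volume.restrict (Set.Ioc (0 : ℝ) (τ k))),
      Y k L t +
        ∑ ℓ : Fin L, ((Rsu ℓ).mulVec (U k ℓ t) + (Rsy ℓ).mulVec (Y k ℓ t)) = 0) :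
    (∀ (Ru : Fin L → Matrix (Fin p) (Fin m) ℝ) (Ry : Fin L → Matrix (Fin p) (Fin p) ℝ),
        (∀ k, ∀ᵐ t ∂(MeasureTheory.volume.restrict (Set.Ioc (0 : ℝ) (τ k))),
          Y k L t +
            ∑ ℓ : Fin L, ((Ru ℓ).mulVec (U k ℓ t) + (Ry ℓ).mulVec (Y k ℓ t)) = 0) →
        Ru = Rsu ∧ Ry = Rsy) ↔
      Submodule.span ℝ
        {x : Fin L × (Fin m ⊕ Fin p) → ℝ |
          ∃ (k : Fin K) (D : ℕ → ℝ → ℝ), IsH0 (τ k) L D ∧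
            x = fun r => (-1 : ℝ) ^ (r.1 : ℕ) *
              ∫ t in (0 : ℝ)..(τ k),
                D (r.1 : ℕ) t * Sum.elim (U k 0 t) (Y k 0 t) r.2} = ⊤ := by
  classical
  -- scalar chains for the components of w
  have Wchain : ∀ k (j : Fin m ⊕ Fin p),
      DerivChain (τ k) (L - 1) (fun b t => Sum.elim (U k b t) (Y k b t) j) := by
    intro k j
    cases j with
    | inl i => exact derivChain_comp (hU k).1 i
    | inr i =>
      have h := derivChain_comp (hY k).1 i
      exact fun ℓ hℓ => h ℓ (by omega)
  have Wtop : ∀ k (j : Fin m ⊕ Fin p),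
      IntervalIntegrable (fun t => Sum.elim (U k (L-1) t) (Y k (L-1) t) j) volume 0 (τ k) := by
    intro k j
    cases j with
    | inl i => exact L2_intervalIntegrable (hτ k).le (memL2_comp (hU k).2 i)
    | inr i =>
      exact chain_intervalIntegrable (hτ k).le (derivChain_comp (hY k).1 i)
        (L2_intervalIntegrable (hτ k).le (memL2_comp (hY k).2 i)) (by omega)
  have Wint : ∀ k (j : Fin m ⊕ Fin p) (ℓ : ℕ), ℓ < L →
      IntervalIntegrable (fun t => Sum.elim (U k ℓ t) (Y k ℓ t) j) volume 0 (τ k) := by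
    intro k j ℓ hℓ
    exact chain_intervalIntegrable (hτ k).le (Wchain k j) (Wtop k j) (by omega)
  have gint : ∀ k (c : (Fin L × (Fin m ⊕ Fin p)) → ℝ),
      IntervalIntegrable
        (fun t => ∑ r : Fin L × (Fin m ⊕ Fin p),
          c r * Sum.elim (U k (r.1:ℕ) t) (Y k (r.1:ℕ) t) r.2) volume 0 (τ k) := by
    intro k c
    have heq : (fun t => ∑ r : Fin L × (Fin m ⊕ Fin p),
          c r * Sum.elim (U k (r.1:ℕ) t) (Y k (r.1:ℕ) t) r.2)
        = ∑ r : Fin L × (Fin m ⊕ Fin p),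
            (fun t => c r * Sum.elim (U k (r.1:ℕ) t) (Y k (r.1:ℕ) t) r.2) := by
      funext t
      rw [Finset.sum_apply]
    rw [heq]
    exact IntervalIntegrable.sum _ (fun r _ => (Wint k r.2 r.1 r.1.isLt).const_mul (c r))
  -- key computation : the pairing of an element of S with c equals ∫ D0 * g
  have hkey : ∀ k (c : (Fin L × (Fin m ⊕ Fin p)) → ℝ) (D : ℕ → ℝ → ℝ), IsH0 (τ k) L D →
      (∑ r : Fin L × (Fin m ⊕ Fin p), ((-1:ℝ) ^ (r.1 : ℕ) *
          ∫ t in (0:ℝ)..(τ k), D (r.1 : ℕ) t * Sum.elim (U k 0 t) (Y k 0 t) r.2) * c r)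
        = ∫ t in (0:ℝ)..(τ k), D 0 t *
            ∑ r : Fin L × (Fin m ⊕ Fin p),
              c r * Sum.elim (U k (r.1:ℕ) t) (Y k (r.1:ℕ) t) r.2 := by
    intro k c D hD
    have hterm : ∀ r : Fin L × (Fin m ⊕ Fin p), ((-1:ℝ) ^ (r.1 : ℕ) *
        ∫ t in (0:ℝ)..(τ k), D (r.1 : ℕ) t * Sum.elim (U k 0 t) (Y k 0 t) r.2) * c r
        = ∫ t in (0:ℝ)..(τ k),
            c r * (D 0 t * Sum.elim (U k (r.1:ℕ) t) (Y k (r.1:ℕ) t) r.2) := by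
      intro r
      have hibp := chain_ibp (hτ k).le hD (Wchain k r.2) (ℓ := (r.1 : ℕ))
        (by omega) r.1.isLt
      rw [hibp, intervalIntegral.integral_const_mul]
      rcases Nat.even_or_odd (r.1 : ℕ) with he | ho
      · rw [he.neg_one_pow]; ring
      · rw [ho.neg_one_pow]; ring
    rw [Finset.sum_congr rfl (fun r _ => hterm r)]
    rw [← intervalIntegral.integral_finset_sum]
    · congr 1
      funext t
      rw [Finset.mul_sum]
      congr 1
      funext r
      ring
    · intro r _
      apply IntervalIntegrable.const_mul
      have h := Wint k r.2 r.1 r.1.isLt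
      apply h.continuousOn_mul
      have := chain_continuousOn (hτ k).le hD.1 (show 0 < L by omega)
      rwa [Set.uIcc_of_le (hτ k).le]
  -- splitting the product-indexed sum into blocks
  have hsplit : ∀ (c : (Fin L × (Fin m ⊕ Fin p)) → ℝ) (k : Fin K) (t : ℝ),
      (∑ r : Fin L × (Fin m ⊕ Fin p),
          c r * Sum.elim (U k (r.1:ℕ) t) (Y k (r.1:ℕ) t) r.2)
        = ∑ ℓ : Fin L, ((∑ j, c (ℓ, Sum.inl j) * U k (ℓ:ℕ) t j)
            + ∑ j, c (ℓ, Sum.inr j) * Y k (ℓ:ℕ) t j) := by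
    intro c k t
    rw [Fintype.sum_prod_type]
    refine Finset.sum_congr rfl fun ℓ _ => ?_
    rw [Fintype.sum_sum_type]
    simp
  constructor
  · -- (i) → (ii)
    intro huniq
    by_contra hne
    have hlt : Submodule.span ℝ
        {x : (Fin L × (Fin m ⊕ Fin p)) → ℝ |
          ∃ (k : Fin K) (D : ℕ → ℝ → ℝ), IsH0 (τ k) L D ∧
            x = fun r => (-1 : ℝ) ^ (r.1 : ℕ) *
              ∫ t in (0 : ℝ)..(τ k),
                D (r.1 : ℕ) t * Sum.elim (U k 0 t) (Y k 0 t) r.2} < ⊤ :=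
      lt_top_iff_ne_top.mpr hne
    obtain ⟨f, hf0, hker⟩ := Submodule.exists_dual_map_eq_bot_of_lt_top hlt inferInstance
    set c : (Fin L × (Fin m ⊕ Fin p)) → ℝ :=
      fun r => f (fun r' => if r = r' then 1 else 0) with hc
    have f_eq : ∀ x : (Fin L × (Fin m ⊕ Fin p)) → ℝ, f x = ∑ r, x r * c r := by
      intro x
      conv_lhs => rw [pi_eq_sum_univ x]
      rw [map_sum]
      exact Finset.sum_congr rfl fun r _ => by rw [f.map_smul, smul_eq_mul]
    have hcne : c ≠ 0 := by
      intro h0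
      apply hf0
      apply LinearMap.ext
      intro x
      rw [f_eq, h0]
      simp
    have hfS : ∀ x ∈ {x : (Fin L × (Fin m ⊕ Fin p)) → ℝ |
          ∃ (k : Fin K) (D : ℕ → ℝ → ℝ), IsH0 (τ k) L D ∧
            x = fun r => (-1 : ℝ) ^ (r.1 : ℕ) *
              ∫ t in (0 : ℝ)..(τ k),
                D (r.1 : ℕ) t * Sum.elim (U k 0 t) (Y k 0 t) r.2}, f x = 0 := by
      intro x hx
      have hmem : f x ∈ Submodule.map f _ := ⟨x, Submodule.subset_span hx, rfl⟩
      rw [hker] at hmem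
      simpa using hmem
    -- a.e. vanishing of the associated g function for each experiment
    have hg : ∀ k, ∀ᵐ t ∂(volume.restrict (Set.Ioc (0:ℝ) (τ k))),
        (∑ r : Fin L × (Fin m ⊕ Fin p),
          c r * Sum.elim (U k (r.1:ℕ) t) (Y k (r.1:ℕ) t) r.2) = 0 := by
      intro k
      set g : ℝ → ℝ := fun t => ∑ r : Fin L × (Fin m ⊕ Fin p),
          c r * Sum.elim (U k (r.1:ℕ) t) (Y k (r.1:ℕ) t) r.2 with hgd
      have hgInt : IntegrableOn g (Set.Ioc 0 (τ k)) volume :=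
        (intervalIntegrable_iff_integrableOn_Ioc_of_le (hτ k).le).mp (gint k c)
      have hloc : MeasureTheory.LocallyIntegrableOn g (Set.Ioo 0 (τ k)) volume :=
        (hgInt.mono_set Set.Ioo_subset_Ioc_self).locallyIntegrableOn
      have htest : ∀ (φ : ℝ → ℝ), ContDiff ℝ ∞ φ → HasCompactSupport φ →
          tsupport φ ⊆ Set.Ioo 0 (τ k) → ∫ x, φ x • g x = 0 := by
        intro φ hφ hφc hφs
        have hD := isH0_of_smooth (hτ k) L hφ hφc hφs
        have h0 := hfS _ ⟨k, fun ℓ => iteratedDeriv ℓ φ, hD, rfl⟩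
        rw [f_eq, hkey k c _ hD] at h0
        have hconv : ∫ x, φ x • g x
            = ∫ t in (0:ℝ)..(τ k), (fun ℓ => iteratedDeriv ℓ φ) 0 t * g t := by
          rw [intervalIntegral.integral_of_le (hτ k).le]
          rw [← MeasureTheory.setIntegral_eq_integral_of_forall_compl_eq_zero
            (s := Set.Ioc (0:ℝ) (τ k)) (f := fun x => φ x • g x) ?_]
          · apply setIntegral_congr_fun measurableSet_Ioc
            intro x _
            simp [iteratedDeriv_zero, smul_eq_mul]
          · intro x hx
            have hφ0 : φ x = 0 := by
              apply image_eq_zero_of_notMem_tsupport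
              intro hmem
              exact hx (Set.Ioo_subset_Ioc_self (hφs hmem))
            rw [hφ0, zero_smul]
        rw [hconv]
        exact h0
      have hdistrib := IsOpen.ae_eq_zero_of_integral_contDiff_smul_eq_zero
        (isOpen_Ioo (a := (0:ℝ)) (b := τ k)) hloc htest
      have h1 : ∀ᵐ t ∂(volume.restrict (Set.Ioc (0:ℝ) (τ k))),
          t ∈ Set.Ioo (0:ℝ) (τ k) → g t = 0 := ae_restrict_of_ae hdistrib
      have h2 : ∀ᵐ t ∂(volume.restrict (Set.Ioc (0:ℝ) (τ k))), t ∈ Set.Ioc (0:ℝ) (τ k) :=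
        ae_restrict_mem measurableSet_Ioc
      have h3 : ∀ᵐ t ∂(volume.restrict (Set.Ioc (0:ℝ) (τ k))), t ≠ τ k := by
        rw [ae_iff]
        apply measure_mono_null (show {t : ℝ | ¬ t ≠ τ k} ⊆ {τ k} by
          intro t ht; simp at ht; simp [ht])
        rw [Measure.restrict_apply (measurableSet_singleton _)]
        exact measure_mono_null Set.inter_subset_left (measure_singleton _)
      filter_upwards [h1, h2, h3] with t ht1 ht2 ht3
      exact ht1 ⟨ht2.1, lt_of_le_of_ne ht2.2 ht3⟩
    -- build the alternative system
    set Ru' : Fin L → Matrix (Fin p) (Fin m) ℝ :=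
      fun ℓ => Matrix.of fun i j => Rsu ℓ i j + c (ℓ, Sum.inl j) with hRu'
    set Ry' : Fin L → Matrix (Fin p) (Fin p) ℝ :=
      fun ℓ => Matrix.of fun i j => Rsy ℓ i j + c (ℓ, Sum.inr j) with hRy'
    have hcons' : ∀ k, ∀ᵐ t ∂(MeasureTheory.volume.restrict (Set.Ioc (0 : ℝ) (τ k))),
        Y k L t +
          ∑ ℓ : Fin L, ((Ru' ℓ).mulVec (U k ℓ t) + (Ry' ℓ).mulVec (Y k ℓ t)) = 0 := by
      intro k
      filter_upwards [hRs k, hg k] with t h1 h2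
      funext i
      have e1 : Y k L t i + ∑ ℓ : Fin L,
          ((∑ j, Rsu ℓ i j * U k (ℓ:ℕ) t j) + ∑ j, Rsy ℓ i j * Y k (ℓ:ℕ) t j) = 0 := by
        have := congrFun h1 i
        simpa [Matrix.mulVec, dotProduct] using this
      have h2' : ∑ ℓ : Fin L, ((∑ j, c (ℓ, Sum.inl j) * U k (ℓ:ℕ) t j)
          + ∑ j, c (ℓ, Sum.inr j) * Y k (ℓ:ℕ) t j) = 0 := by
        rw [← hsplit c k t]
        exact h2
      have egoal : (Y k L t +
          ∑ ℓ : Fin L, ((Ru' ℓ).mulVec (U k ℓ t) + (Ry' ℓ).mulVec (Y k ℓ t))) i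
          = (Y k L t i + ∑ ℓ : Fin L,
              ((∑ j, Rsu ℓ i j * U k (ℓ:ℕ) t j) + ∑ j, Rsy ℓ i j * Y k (ℓ:ℕ) t j))
            + ∑ ℓ : Fin L, ((∑ j, c (ℓ, Sum.inl j) * U k (ℓ:ℕ) t j)
              + ∑ j, c (ℓ, Sum.inr j) * Y k (ℓ:ℕ) t j) := by
        simp only [Pi.add_apply, Finset.sum_apply, Matrix.mulVec, dotProduct,
          Matrix.of_apply, hRu', hRy', add_mul, Finset.sum_add_distrib]
        ring
      rw [show ((0 : Fin p → ℝ) i) = 0 from rfl, egoal, e1, h2']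
      ring
    obtain ⟨hRuEq, hRyEq⟩ := huniq Ru' Ry' hcons'
    apply hcne
    funext r
    obtain ⟨ℓ, j | j⟩ := r
    · have := congrFun (congrFun (congrFun hRuEq ℓ) ⟨0, hp⟩) j
      simp only [hRu', Matrix.of_apply] at this
      simpa using sub_eq_zero.mpr this |>.symm ▸ (by linarith [this] : c (ℓ, Sum.inl j) = 0)
    · have := congrFun (congrFun (congrFun hRyEq ℓ) ⟨0, hp⟩) j
      simp only [hRy', Matrix.of_apply] at this
      simpa using sub_eq_zero.mpr this |>.symm ▸ (by linarith [this] : c (ℓ, Sum.inr j) = 0)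
  · -- (ii) → (i)
    intro hspan Ru Ry hcons
    have hcrow : ∀ i : Fin p, ∀ r : Fin L × (Fin m ⊕ Fin p),
        Sum.elim (fun j => Ru r.1 i j - Rsu r.1 i j)
          (fun j => Ry r.1 i j - Rsy r.1 i j) r.2 = 0 := by
      intro i
      set c : (Fin L × (Fin m ⊕ Fin p)) → ℝ := fun r =>
        Sum.elim (fun j => Ru r.1 i j - Rsu r.1 i j)
          (fun j => Ry r.1 i j - Rsy r.1 i j) r.2 with hc
      have hg : ∀ k, ∀ᵐ t ∂(volume.restrict (Set.Ioc (0:ℝ) (τ k))),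
          (∑ r : Fin L × (Fin m ⊕ Fin p),
            c r * Sum.elim (U k (r.1:ℕ) t) (Y k (r.1:ℕ) t) r.2) = 0 := by
        intro k
        filter_upwards [hcons k, hRs k] with t h1 h2
        have e1 : Y k L t i + ∑ ℓ : Fin L,
            ((∑ j, Ru ℓ i j * U k (ℓ:ℕ) t j) + ∑ j, Ry ℓ i j * Y k (ℓ:ℕ) t j) = 0 := by
          have := congrFun h1 i
          simpa [Matrix.mulVec, dotProduct] using this
        have e2 : Y k L t i + ∑ ℓ : Fin L,
            ((∑ j, Rsu ℓ i j * U k (ℓ:ℕ) t j) + ∑ j, Rsy ℓ i j * Y k (ℓ:ℕ) t j) = 0 := by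
          have := congrFun h2 i
          simpa [Matrix.mulVec, dotProduct] using this
        rw [hsplit c k t]
        have expand : ∑ ℓ : Fin L, ((∑ j, c (ℓ, Sum.inl j) * U k (ℓ:ℕ) t j)
            + ∑ j, c (ℓ, Sum.inr j) * Y k (ℓ:ℕ) t j)
            = (∑ ℓ : Fin L, ((∑ j, Ru ℓ i j * U k (ℓ:ℕ) t j) + ∑ j, Ry ℓ i j * Y k (ℓ:ℕ) t j))
              - ∑ ℓ : Fin L, ((∑ j, Rsu ℓ i j * U k (ℓ:ℕ) t j)
                + ∑ j, Rsy ℓ i j * Y k (ℓ:ℕ) t j) := by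
          rw [← Finset.sum_sub_distrib]
          refine Finset.sum_congr rfl fun ℓ _ => ?_
          simp only [hc, Sum.elim_inl, Sum.elim_inr, sub_mul, Finset.sum_sub_distrib]
          ring
        rw [expand]
        linarith [e1, e2]
      -- the linear functional x ↦ ∑ r, x r * c r vanishes on the spanning set
      have hallx : ∀ x : (Fin L × (Fin m ⊕ Fin p)) → ℝ, (∑ r, x r * c r) = 0 := by
        intro x
        have hx : x ∈ Submodule.span ℝ
            {x : (Fin L × (Fin m ⊕ Fin p)) → ℝ |
              ∃ (k : Fin K) (D : ℕ → ℝ → ℝ), IsH0 (τ k) L D ∧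
                x = fun r => (-1 : ℝ) ^ (r.1 : ℕ) *
                  ∫ t in (0 : ℝ)..(τ k),
                    D (r.1 : ℕ) t * Sum.elim (U k 0 t) (Y k 0 t) r.2} := by
          rw [hspan]; trivial
        induction hx using Submodule.span_induction with
        | mem x hx =>
          obtain ⟨k, D, hD, rfl⟩ := hx
          rw [hkey k c D hD, intervalIntegral.integral_of_le (hτ k).le]
          apply MeasureTheory.integral_eq_zero_of_ae
          filter_upwards [hg k] with t ht
          simp only [Pi.zero_apply, ht, mul_zero]
        | zero => simp
        | add x y _ _ hx hy =>
          simp only [Pi.add_apply, add_mul, Finset.sum_add_distrib, hx, hy, add_zero]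
        | smul a x _ hx =>
          simp only [Pi.smul_apply, smul_eq_mul, mul_assoc, ← Finset.mul_sum, hx, mul_zero]
      intro r
      have := hallx (Pi.single r 1)
      rw [Finset.sum_eq_single r] at this
      · simpa using this
      · intro b _ hb
        simp [Pi.single_apply, hb]
      · intro hr
        exact absurd (Finset.mem_univ r) hr
    constructor
    · funext ℓ
      ext i j
      have := hcrow i (ℓ, Sum.inl j)
      simp only [Sum.elim_inl] at this
      linarith [this]
    · funext ℓ
      ext i j
      have := hcrow i (ℓ, Sum.inr j)
      simp only [Sum.elim_inr] at this
      linarith [this]
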